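/- Let A be a g-circulant matrix of order k × k over a field. If gcd(k, g) > 1, then A has two identical rows; in particular, A is singular and hence not MDS. -/
import Mathlib


/-- The `g`-circulant matrix with first row `c`: entry `(i,j)` is `c (j - g*i)`. -/
def gCirc {k : ℕ} {F : Type*} (g : ℕ) (c : ZMod k → F) : Matrix (ZMod k) (ZMod k) F :=
  Matrix.of fun i j => c (j - (g : ZMod k) * i)

/-- A square matrix is MDS if every square submatrix is nonsingular. -/
def IsMDS {ι : Type*} [Fintype ι] [DecidableEq ι] {F : Type*} [Field F]
    (A : Matrix ι ι F) : Prop :=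
  ∀ (n : ℕ) (r s : Fin n → ι), Function.Injective r → Function.Injective s →
    (Matrix.of fun a b => A (r a) (s b)).det ≠ 0

theorem gCirc_not_mds_of_gcd_gt_one {k : ℕ} [NeZero k] {F : Type*} [Field F]
    (g : ℕ) (c : ZMod k → F) (h : 1 < Nat.gcd k g) :
    (∃ i₁ i₂ : ZMod k, i₁ ≠ i₂ ∧ ∀ j, gCirc g c i₁ j = gCirc g c i₂ j) ∧
      (gCirc g c).det = 0 ∧ ¬ IsMDS (gCirc g c) := by
  set d := Nat.gcd k g with hd
  have hk : 0 < k := Nat.pos_of_ne_zero (NeZero.ne k)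
  have hdk : d ∣ k := Nat.gcd_dvd_left k g
  have hdg : d ∣ g := Nat.gcd_dvd_right k g
  have hdpos : 0 < d := lt_trans Nat.zero_lt_one h
  have hkd_pos : 0 < k / d := Nat.div_pos (Nat.le_of_dvd hk hdk) hdpos
  have hkd_lt : k / d < k := Nat.div_lt_self hk h
  -- the key element
  set e : ZMod k := ((k / d : ℕ) : ZMod k) with he
  have he_ne : e ≠ 0 := by
    rw [he, Ne, ZMod.natCast_eq_zero_iff]
    intro hdvd
    exact absurd (Nat.le_of_dvd hkd_pos hdvd) (not_le.mpr hkd_lt)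
  have hge : (g : ZMod k) * e = 0 := by
    rw [he, ← Nat.cast_mul]
    have : g * (k / d) = (g / d) * k := by
      clear_value d e
      obtain ⟨a, ha⟩ := hdg
      obtain ⟨b, hb⟩ := hdk
      subst ha hb
      rw [Nat.mul_div_cancel_left _ hdpos, Nat.mul_div_cancel_left _ hdpos]
      ring
    rw [this, Nat.cast_mul, ZMod.natCast_self, mul_zero]
  have hrows : ∀ j, gCirc g c 0 j = gCirc g c e j := by
    intro j
    simp [gCirc, hge]
  have hne : (0 : ZMod k) ≠ e := fun hh => he_ne hh.symm
  have hroweq : gCirc g c 0 = gCirc g c e := funext hrows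
  have hdet : (gCirc g c).det = 0 := Matrix.det_zero_of_row_eq hne hroweq
  refine ⟨⟨0, e, hne, hrows⟩, hdet, ?_⟩
  intro hmds
  have := hmds (Fintype.card (ZMod k)) ((Fintype.equivFin (ZMod k)).symm)
    ((Fintype.equivFin (ZMod k)).symm) (Equiv.injective _) (Equiv.injective _)
  apply this
  have : (Matrix.of fun a b => gCirc g c ((Fintype.equivFin (ZMod k)).symm a)
      ((Fintype.equivFin (ZMod k)).symm b)) =
      (gCirc g c).submatrix (Fintype.equivFin (ZMod k)).symm (Fintype.equivFin (ZMod k)).symm :=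
    rfl
  rw [this, Matrix.det_submatrix_equiv_self, hdet]
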